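/- Let μ be a probability measure on a measurable space Ω, and let f, g : Ω → ℝ be measurable functions satisfying a ≤ f(x) ≤ A and b ≤ g(x) ≤ B for all x ∈ Ω. Then |∫ f·g dμ − (∫ f dμ)(∫ g dμ)| ≤ (A − a)(B − b)/4. -/

import Mathlib

open MeasureTheory

/-- Grüss-type inequality: for a probability measure `μ` and bounded measurable
functions `f, g` with `a ≤ f ≤ A` and `b ≤ g ≤ B`, one has
`|∫ f·g dμ − (∫ f dμ)(∫ g dμ)| ≤ (A − a)(B − b)/4`. -/
theorem gruss_inequality {Ω : Type*} [MeasurableSpace Ω] (μ : Measure Ω)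
    [IsProbabilityMeasure μ] (f g : Ω → ℝ) (hf : Measurable f) (hg : Measurable g)
    (a A b B : ℝ) (hfa : ∀ x, a ≤ f x) (hfA : ∀ x, f x ≤ A)
    (hgb : ∀ x, b ≤ g x) (hgB : ∀ x, g x ≤ B) :
    |∫ x, f x * g x ∂μ - (∫ x, f x ∂μ) * (∫ x, g x ∂μ)| ≤ (A - a) * (B - b) / 4 := by
  have hne : Nonempty Ω := by
    by_contra h
    have : μ Set.univ = 0 := by
      rw [Set.univ_eq_empty_iff.mpr (not_nonempty_iff.mp h)]; simp
    simp [measure_univ] at this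
  obtain ⟨x₀⟩ := hne
  have haA : a ≤ A := (hfa x₀).trans (hfA x₀)
  have hbB : b ≤ B := (hgb x₀).trans (hgB x₀)
  -- integrability of bounded measurable functions
  have hbdd : ∀ (h : Ω → ℝ) (c C : ℝ), Measurable h → (∀ x, c ≤ h x) → (∀ x, h x ≤ C) →
      Integrable h μ := by
    intro h c C hm hc hC
    refine (integrable_const (max |c| |C|)).mono' hm.aestronglyMeasurable ?_
    filter_upwards with x
    rw [Real.norm_eq_abs, abs_le]
    constructor
    · exact le_trans (neg_le_neg (le_max_left _ _)) (by have := neg_abs_le c; linarith [hc x])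
    · exact le_trans (hC x) ((le_abs_self C).trans (le_max_right _ _))
  have hfi : Integrable f μ := hbdd f a A hf hfa hfA
  have hgi : Integrable g μ := hbdd g b B hg hgb hgB
  set mf := ∫ x, f x ∂μ with hmf
  set mg := ∫ x, g x ∂μ with hmg
  have hmfa : a ≤ mf := by
    calc a = ∫ _, a ∂μ := by simp
    _ ≤ mf := integral_mono (integrable_const a) hfi fun x => hfa x
  have hmfA : mf ≤ A := by
    calc mf ≤ ∫ _, A ∂μ := integral_mono hfi (integrable_const A) fun x => hfA x
    _ = A := by simp
  have hmgb : b ≤ mg := by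
    calc b = ∫ _, b ∂μ := by simp
    _ ≤ mg := integral_mono (integrable_const b) hgi fun x => hgb x
  have hmgB : mg ≤ B := by
    calc mg ≤ ∫ _, B ∂μ := integral_mono hgi (integrable_const B) fun x => hgB x
    _ = B := by simp
  set F : Ω → ℝ := fun x => f x - mf with hF
  set G : Ω → ℝ := fun x => g x - mg with hG
  have hFm : Measurable F := hf.sub measurable_const
  have hGm : Measurable G := hg.sub measurable_const
  have hFb : ∀ x, |F x| ≤ A - a := by
    intro x; rw [abs_le]; constructor <;> simp only [hF] <;> nlinarith [hfa x, hfA x]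
  have hGb : ∀ x, |G x| ≤ B - b := by
    intro x; rw [abs_le]; constructor <;> simp only [hG] <;> nlinarith [hgb x, hgB x]
  -- integrabilities
  have hFGi : Integrable (fun x => F x * G x) μ := by
    refine hbdd _ (-((A - a) * (B - b))) ((A - a) * (B - b)) (hFm.mul hGm) ?_ ?_ <;> intro x <;>
      [skip; skip] <;>
      have h1 := hFb x <;> have h2 := hGb x <;>
      have := abs_mul (F x) (G x) <;>
      have h3 : |F x * G x| ≤ (A - a) * (B - b) := by
        rw [abs_mul]; exact mul_le_mul h1 h2 (abs_nonneg _) (by linarith [abs_nonneg (F x)])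
    · linarith [neg_abs_le (F x * G x)]
    · linarith [le_abs_self (F x * G x)]
  have hF2i : Integrable (fun x => F x * F x) μ := by
    refine hbdd _ 0 ((A - a) * (A - a)) (hFm.mul hFm) (fun x => mul_self_nonneg _) ?_
    intro x
    have := hFb x
    calc F x * F x = |F x| * |F x| := (abs_mul_abs_self _).symm
    _ ≤ (A - a) * (A - a) := mul_le_mul this this (abs_nonneg _) (by linarith)
  have hG2i : Integrable (fun x => G x * G x) μ := by
    refine hbdd _ 0 ((B - b) * (B - b)) (hGm.mul hGm) (fun x => mul_self_nonneg _) ?_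
    intro x
    have := hGb x
    calc G x * G x = |G x| * |G x| := (abs_mul_abs_self _).symm
    _ ≤ (B - b) * (B - b) := mul_le_mul this this (abs_nonneg _) (by linarith)
  -- covariance identity
  have hcov : ∫ x, f x * g x ∂μ - mf * mg = ∫ x, F x * G x ∂μ := by
    have hfgi : Integrable (fun x => f x * g x) μ := by
      have hkey : ∀ x, |f x * g x| ≤ (|a| + |A|) * (|b| + |B|) := by
        intro x
        have h1 : |f x| ≤ |a| + |A| := by
          rw [abs_le]
          constructor
          · nlinarith [hfa x, neg_abs_le a, abs_nonneg A]
          · nlinarith [hfA x, le_abs_self A, abs_nonneg a]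
        have h2 : |g x| ≤ |b| + |B| := by
          rw [abs_le]
          constructor
          · nlinarith [hgb x, neg_abs_le b, abs_nonneg B]
          · nlinarith [hgB x, le_abs_self B, abs_nonneg b]
        rw [abs_mul]
        exact mul_le_mul h1 h2 (abs_nonneg _) (by positivity)
      refine hbdd _ (-((|a| + |A|) * (|b| + |B|))) ((|a| + |A|) * (|b| + |B|))
        (hf.mul hg) ?_ ?_ <;> intro x
      · linarith [neg_abs_le (f x * g x), hkey x]
      · linarith [le_abs_self (f x * g x), hkey x]
    have : ∀ x, F x * G x = f x * g x - mg * f x - mf * g x + mf * mg := by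
      intro x; simp only [hF, hG]; ring
    rw [integral_congr_ae (Filter.Eventually.of_forall this)]
    have i1 : Integrable (fun x => mg * f x) μ := hfi.const_mul mg
    have i2 : Integrable (fun x => mf * g x) μ := hgi.const_mul mf
    have i3 : Integrable (fun x => f x * g x - mg * f x) μ := hfgi.sub i1
    have i4 : Integrable (fun x => f x * g x - mg * f x - mf * g x) μ := i3.sub i2
    rw [integral_add i4 (integrable_const _), integral_sub i3 i2,
      integral_sub hfgi i1, integral_const_mul, integral_const_mul]
    simp only [integral_const, measure_univ, ENNReal.toReal_one, probReal_univ, smul_eq_mul, one_mul, ← hmf, ← hmg]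
    ring
  -- Cauchy–Schwarz via discriminant
  set c := ∫ x, F x * G x ∂μ with hc
  set vF := ∫ x, F x * F x ∂μ with hvF
  set vG := ∫ x, G x * G x ∂μ with hvG
  have hCS : c * c ≤ vF * vG := by
    have key : ∀ t : ℝ, 0 ≤ vG * (t * t) + (2 * c) * t + vF := by
      intro t
      have : ∀ x, 0 ≤ (F x + t * G x) * (F x + t * G x) := fun x => mul_self_nonneg _
      have h0 : 0 ≤ ∫ x, (F x + t * G x) * (F x + t * G x) ∂μ :=
        integral_nonneg fun x => this x
      have hexp : ∀ x, (F x + t * G x) * (F x + t * G x) =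
          (G x * G x) * (t * t) + (2 * (F x * G x)) * t + F x * F x := by
        intro x; ring
      rw [integral_congr_ae (Filter.Eventually.of_forall hexp)] at h0
      have j1 : Integrable (fun x => G x * G x * (t * t)) μ := hG2i.mul_const _
      have j2 : Integrable (fun x => 2 * (F x * G x) * t) μ := (hFGi.const_mul 2).mul_const t
      have j3 : Integrable (fun x => G x * G x * (t * t) + 2 * (F x * G x) * t) μ := j1.add j2
      rwa [integral_add j3 hF2i, integral_add j1 j2,
        integral_mul_const, integral_mul_const, integral_const_mul] at h0
    have hd := discrim_le_zero key
    rw [discrim] at hd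
    nlinarith
  -- variance bounds via Popoviciu
  have hvFle : vF ≤ ((A - a) / 2) ^ 2 := by
    have hmem : MemLp f 2 μ :=
      memLp_of_bounded (Filter.Eventually.of_forall fun x => ⟨hfa x, hfA x⟩)
        hf.aestronglyMeasurable 2
    have hv := ProbabilityTheory.variance_le_sq_of_bounded
      (μ := μ) (X := f) (a := a) (b := A)
      (Filter.Eventually.of_forall fun x => ⟨hfa x, hfA x⟩) hf.aemeasurable
    have heq : ProbabilityTheory.variance f μ = vF := by
      rw [ProbabilityTheory.variance_eq_integral hf.aemeasurable, hvF]
      apply integral_congr_ae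
      filter_upwards with x
      simp [hF, sq, ← hmf]
    rwa [heq] at hv
  have hvGle : vG ≤ ((B - b) / 2) ^ 2 := by
    have hmem : MemLp g 2 μ :=
      memLp_of_bounded (Filter.Eventually.of_forall fun x => ⟨hgb x, hgB x⟩)
        hg.aestronglyMeasurable 2
    have hv := ProbabilityTheory.variance_le_sq_of_bounded
      (μ := μ) (X := g) (a := b) (b := B)
      (Filter.Eventually.of_forall fun x => ⟨hgb x, hgB x⟩) hg.aemeasurable
    have heq : ProbabilityTheory.variance g μ = vG := by
      rw [ProbabilityTheory.variance_eq_integral hg.aemeasurable, hvG]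
      apply integral_congr_ae
      filter_upwards with x
      simp [hG, sq, ← hmg]
    rwa [heq] at hv
  have hvF0 : 0 ≤ vF := integral_nonneg fun x => mul_self_nonneg _
  have hvG0 : 0 ≤ vG := integral_nonneg fun x => mul_self_nonneg _
  have hsq : c * c ≤ ((A - a) * (B - b) / 4) ^ 2 := by
    calc c * c ≤ vF * vG := hCS
    _ ≤ ((A - a) / 2) ^ 2 * ((B - b) / 2) ^ 2 :=
        mul_le_mul hvFle hvGle hvG0 (sq_nonneg _)
    _ = ((A - a) * (B - b) / 4) ^ 2 := by ring
  rw [hcov]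
  have hR0 : 0 ≤ (A - a) * (B - b) / 4 := by
    have := mul_nonneg (by linarith : (0:ℝ) ≤ A - a) (by linarith : (0:ℝ) ≤ B - b)
    linarith
  nlinarith [abs_nonneg c, sq_abs c, le_abs_self c, neg_abs_le c]
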